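/- Let Ω_0 := ℝ×ω ⊆ ℝ^d be the straight tube. Then λ1(Ω_0) = λ1(ω), i.e., the spectral threshold of the straight tube equals the spectral threshold of its cross-section. -/

import Mathlib

open MeasureTheory Set Filter

noncomputable section

abbrev E (m : ℕ) := EuclideanSpace ℝ (Fin m)

/-- The spectral threshold `λ₁(Ω)` of an open set `Ω ⊆ ℝ^m`: the infimum of the
Rayleigh quotient `(∫_Ω |∇u|^p)/(∫_Ω |u|^p)` over nonzero smooth compactly
supported functions `u` with support in `Ω`. -/
def lam1 (p : ℝ) {m : ℕ} (Ω : Set (E m)) : ℝ :=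
  sInf {r : ℝ | ∃ u : E m → ℝ, ContDiff ℝ (⊤ : ℕ∞) u ∧ HasCompactSupport u ∧
    tsupport u ⊆ Ω ∧ u ≠ 0 ∧
    r = (∫ x in Ω, ‖fderiv ℝ u x‖ ^ p) / (∫ x in Ω, |u x| ^ p)}

/-- The straight tube `ℝ × ω`. -/
def tube {m : ℕ} (ω : Set (E m)) : Set (ℝ × E m) := Set.univ ×ˢ ω

/-- Longitudinal partial derivative `∂_s ψ`. -/
def dS {m : ℕ} (ψ : ℝ × E m → ℝ) (x : ℝ × E m) : ℝ := fderiv ℝ ψ x (1, 0)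

/-- Transverse partial derivative `∂_{t_μ} ψ`. -/
def dT {m : ℕ} (ψ : ℝ × E m → ℝ) (x : ℝ × E m) (μ : Fin m) : ℝ :=
  fderiv ℝ ψ x (0, EuclideanSpace.single μ 1)

/-- `|∇u|^p` (Euclidean norm of the full gradient, to the power `p`) on `ℝ × ℝ^m`. -/
def gradP (p : ℝ) {m : ℕ} (u : ℝ × E m → ℝ) (x : ℝ × E m) : ℝ :=
  (dS u x ^ 2 + ∑ μ, dT u x μ ^ 2) ^ (p / 2)

/-- The spectral threshold `λ₁(Ω)` of an open subset of the product space `ℝ × ℝ^m`. -/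
def lam1Prod (p : ℝ) {m : ℕ} (Ω : Set (ℝ × E m)) : ℝ :=
  sInf {r : ℝ | ∃ u : ℝ × E m → ℝ, ContDiff ℝ (⊤ : ℕ∞) u ∧ HasCompactSupport u ∧
    tsupport u ⊆ Ω ∧ u ≠ 0 ∧
    r = (∫ x in Ω, gradP p u x) / (∫ x in Ω, |u x| ^ p)}

open Topology

set_option linter.unusedSectionVars false
set_option linter.unusedVariables false
set_option maxHeartbeats 1000000

section Gen
variable {X : Type*} [NormedAddCommGroup X] [NormedSpace ℝ X] [MeasureSpace X]
  [BorelSpace X] [(volume : Measure X).IsOpenPosMeasure] [IsFiniteMeasureOnCompacts (volume : Measure X)]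


  [BorelSpace X] [(volume : Measure X).IsOpenPosMeasure] [IsFiniteMeasureOnCompacts (volume : Measure X)]

-- |f|^p continuous, compact support, integrable
lemma cont_abs_rpow {p : ℝ} (hp0 : 0 < p) {f : X → ℝ} (hf : Continuous f) :
    Continuous (fun x => |f x| ^ p) := by
  have h : Continuous (fun y : ℝ => y ^ p) :=
    continuous_iff_continuousAt.mpr (fun x => Real.continuousAt_rpow_const x p (Or.inr hp0.le))
  exact h.comp hf.abs

lemma integrable_abs_rpow {p : ℝ} (hp0 : 0 < p) {f : X → ℝ} (hf : Continuous f)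
    (hsupp : HasCompactSupport f) : Integrable (fun x => |f x| ^ p) := by
  apply Continuous.integrable_of_hasCompactSupport (cont_abs_rpow hp0 hf)
  apply HasCompactSupport.intro hsupp
  intro x hx
  have : f x = 0 := image_eq_zero_of_notMem_tsupport hx
  rw [this, abs_zero, Real.zero_rpow hp0.ne']

lemma integral_abs_rpow_pos {p : ℝ} (hp0 : 0 < p) {f : X → ℝ} (hf : Continuous f)
    (hsupp : HasCompactSupport f) (hne : f ≠ 0) :
    0 < ∫ x, |f x| ^ p := by
  rw [integral_pos_iff_support_of_nonneg
    (fun x => Real.rpow_nonneg (abs_nonneg _) p) (integrable_abs_rpow hp0 hf hsupp)]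
  have hss : Function.support (fun x => |f x| ^ p) = Function.support f := by
    ext x
    simp only [Function.mem_support]
    rw [not_iff_not.symm]
    push_neg
    constructor
    · intro h
      by_contra hfx
      have : |f x| ^ p ≠ 0 := by
        have : 0 < |f x| := abs_pos.mpr hfx
        exact (Real.rpow_pos_of_pos this p).ne'
      exact this h
    · intro h; rw [h, abs_zero, Real.zero_rpow hp0.ne']
  rw [hss]
  obtain ⟨x, hx⟩ : ∃ x, f x ≠ 0 := by
    by_contra h; push_neg at h; exact hne (funext h)
  have hopen : IsOpen (Function.support f) := hf.isOpen_support
  exact hopen.measure_pos volume ⟨x, hx⟩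


end Gen

section Main
variable {m : ℕ} {p : ℝ} {ω : Set (E m)} {u : ℝ × E m → ℝ} {s : ℝ}


lemma clm_norm_sq {m : ℕ} (L : E m →L[ℝ] ℝ) :
    ‖L‖^2 = ∑ μ, (L (EuclideanSpace.single μ 1))^2 := by
  obtain ⟨v, rfl⟩ := (InnerProductSpace.toDual ℝ (E m)).surjective L
  have h1 : ‖(InnerProductSpace.toDual ℝ (E m)) v‖ = ‖v‖ := by simp
  rw [h1]
  have : ∀ μ, (InnerProductSpace.toDual ℝ (E m)) v (EuclideanSpace.single μ 1) = v μ := by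
    intro μ
    simp [InnerProductSpace.toDual_apply_apply, EuclideanSpace.inner_single_right]
  simp_rw [this]
  rw [EuclideanSpace.norm_eq, Real.sq_sqrt (by positivity)]
  simp [sq_abs]

lemma clm_norm_rpow {m : ℕ} {p : ℝ} (L : E m →L[ℝ] ℝ) :
    ‖L‖ ^ p = (∑ μ, (L (EuclideanSpace.single μ 1))^2) ^ (p/2) := by
  rw [← clm_norm_sq]
  rw [← Real.rpow_natCast ‖L‖ 2, ← Real.rpow_mul (norm_nonneg _)]
  congr 1
  ring

-- convexity inequality
lemma convex_ineq {p : ℝ} (hp : 1 < p) {a b θ : ℝ} (ha : 0 ≤ a) (hb : 0 ≤ b)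
    (hθ : θ ∈ Set.Ioo (0:ℝ) 1) :
    (a + b)^p ≤ (1-θ)^(1-p) * a^p + θ^(1-p) * b^p := by
  obtain ⟨hθ0, hθ1⟩ := hθ
  have h1θ : (0:ℝ) < 1 - θ := by linarith
  have key := (convexOn_rpow hp.le).2 (x := a/(1-θ)) (y := b/θ)
    (Set.mem_Ici.mpr (by positivity)) (Set.mem_Ici.mpr (by positivity)) h1θ.le hθ0.le (by ring)
  simp only [smul_eq_mul] at key
  have e1 : (1-θ) * (a/(1-θ)) + θ * (b/θ) = a + b := by
    field_simp
  rw [e1] at key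
  refine key.trans (le_of_eq ?_)
  rw [Real.div_rpow ha h1θ.le, Real.div_rpow hb hθ0.le]
  rw [Real.rpow_sub h1θ 1 p, Real.rpow_sub hθ0 1 p, Real.rpow_one, Real.rpow_one]
  have hap : (0:ℝ) < (1-θ)^p := Real.rpow_pos_of_pos h1θ p
  have hbp : (0:ℝ) < θ^p := Real.rpow_pos_of_pos hθ0 p
  field_simp





lemma gradP_nonneg (u : ℝ × E m → ℝ) (x : ℝ × E m) : 0 ≤ gradP p u x :=
  Real.rpow_nonneg (by positivity) _

lemma gradP_zero_of_nmem (hp0 : 0 < p) (u : ℝ × E m → ℝ) {x : ℝ × E m}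
    (hx : x ∉ tsupport u) : gradP p u x = 0 := by
  have h : fderiv ℝ u x = 0 := fderiv_of_notMem_tsupport ℝ hx
  unfold gradP dS dT
  rw [h]
  simp only [ContinuousLinearMap.zero_apply]
  norm_num
  exact Real.zero_rpow (by positivity)

lemma gradP_continuous (hp0 : 0 < p) {u : ℝ × E m → ℝ} (hu : ContDiff ℝ (⊤ : ℕ∞) u) :
    Continuous (gradP p u) := by
  have hd : Continuous (fderiv ℝ u) := (hu.continuous_fderiv (by simp))
  have h1 : Continuous fun x => dS u x ^ 2 + ∑ μ, dT u x μ ^ 2 := by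
    apply Continuous.add
    · exact ((hd.clm_apply continuous_const).pow 2)
    · exact continuous_finset_sum _ (fun μ _ => (hd.clm_apply continuous_const).pow 2)
  have h2 : Continuous (fun y : ℝ => y ^ (p/2)) :=
    continuous_iff_continuousAt.mpr (fun x => Real.continuousAt_rpow_const x _ (Or.inr (by positivity)))
  exact h2.comp h1

lemma gradP_integrable (hp0 : 0 < p) {u : ℝ × E m → ℝ} (hu : ContDiff ℝ (⊤ : ℕ∞) u)
    (hsupp : HasCompactSupport u) : Integrable (gradP p u) := by
  apply Continuous.integrable_of_hasCompactSupport (gradP_continuous hp0 hu)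
  exact HasCompactSupport.intro hsupp (fun x hx => gradP_zero_of_nmem hp0 u hx)




lemma slice_contDiff (hu : ContDiff ℝ (⊤ : ℕ∞) u) (s : ℝ) :
    ContDiff ℝ (⊤ : ℕ∞) (fun t => u (s, t)) :=
  hu.comp (contDiff_const.prodMk contDiff_id)

lemma slice_hasCompactSupport (hsupp : HasCompactSupport u) (s : ℝ) :
    HasCompactSupport (fun t => u (s, t)) := by
  apply HasCompactSupport.intro (hsupp.image continuous_snd)
  intro t ht
  by_contra h
  exact ht ⟨(s, t), subset_tsupport u h, rfl⟩

lemma slice_tsupport (hs : tsupport u ⊆ tube ω) (s : ℝ) :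
    tsupport (fun t => u (s, t)) ⊆ ω := by
  have hclosed : IsClosed {t : E m | (s, t) ∈ tsupport u} :=
    (isClosed_tsupport u).preimage (Continuous.prodMk_right s)
  have hsub : Function.support (fun t => u (s, t)) ⊆ {t : E m | (s, t) ∈ tsupport u} :=
    fun t ht => subset_tsupport u ht
  refine (closure_minimal hsub hclosed).trans ?_
  intro t ht
  exact (hs ht).2

lemma slice_fderiv_apply (hu : ContDiff ℝ (⊤ : ℕ∞) u) (s : ℝ) (t : E m) (μ : Fin m) :
    fderiv ℝ (fun t => u (s, t)) t (EuclideanSpace.single μ 1) = dT u (s, t) μ := by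
  have hdu : HasFDerivAt u (fderiv ℝ u (s, t)) (s, t) :=
    (hu.differentiable (by simp) (s, t)).hasFDerivAt
  have hincl : HasFDerivAt (fun t : E m => (s, t)) (ContinuousLinearMap.inr ℝ ℝ (E m)) t :=
    (hasFDerivAt_const s t).prodMk (hasFDerivAt_id t)
  have h := (hdu.comp t hincl).fderiv
  have he : (fun t : E m => u (s, t)) = u ∘ Prod.mk s := rfl
  rw [he, h]
  rfl




lemma norm_fderiv_rpow_zero_of_nmem (hp0 : 0 < p) {v : E m → ℝ} {x : E m}
    (hx : x ∉ tsupport v) : ‖fderiv ℝ v x‖ ^ p = 0 := by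
  rw [fderiv_of_notMem_tsupport ℝ hx, norm_zero, Real.zero_rpow hp0.ne']

lemma norm_fderiv_rpow_integrable (hp0 : 0 < p) {v : E m → ℝ} (hv : ContDiff ℝ (⊤ : ℕ∞) v)
    (hsupp : HasCompactSupport v) : Integrable (fun x => ‖fderiv ℝ v x‖ ^ p) := by
  have hc : Continuous (fun x => ‖fderiv ℝ v x‖ ^ p) := by
    have h2 : Continuous (fun y : ℝ => y ^ p) :=
      continuous_iff_continuousAt.mpr (fun x => Real.continuousAt_rpow_const x _ (Or.inr hp0.le))
    exact h2.comp (hv.continuous_fderiv (by simp)).norm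
  apply hc.integrable_of_hasCompactSupport
  exact HasCompactSupport.intro hsupp (fun x hx => norm_fderiv_rpow_zero_of_nmem hp0 hx)

lemma lam1_setInt_eq_abs (hp0 : 0 < p) {v : E m → ℝ} (hvω : tsupport v ⊆ ω) :
    ∫ x in ω, |v x| ^ p = ∫ x, |v x| ^ p := by
  apply setIntegral_eq_integral_of_forall_compl_eq_zero
  intro x hx
  rw [image_eq_zero_of_notMem_tsupport (fun h => hx (hvω h)), abs_zero, Real.zero_rpow hp0.ne']

lemma lam1_setInt_eq_fderiv (hp0 : 0 < p) {v : E m → ℝ} (hvω : tsupport v ⊆ ω) :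
    ∫ x in ω, ‖fderiv ℝ v x‖ ^ p = ∫ x, ‖fderiv ℝ v x‖ ^ p := by
  apply setIntegral_eq_integral_of_forall_compl_eq_zero
  intro x hx
  exact norm_fderiv_rpow_zero_of_nmem hp0 (fun h => hx (hvω h))

lemma lam1_set_subset_Ici :
    {r : ℝ | ∃ u : E m → ℝ, ContDiff ℝ (⊤ : ℕ∞) u ∧ HasCompactSupport u ∧
      tsupport u ⊆ ω ∧ u ≠ 0 ∧
      r = (∫ x in ω, ‖fderiv ℝ u x‖ ^ p) / (∫ x in ω, |u x| ^ p)} ⊆ Set.Ici 0 := by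
  rintro r ⟨u, -, -, -, -, rfl⟩
  rw [Set.mem_Ici]
  apply div_nonneg
  · exact integral_nonneg (fun x => Real.rpow_nonneg (norm_nonneg _) p)
  · exact integral_nonneg (fun x => Real.rpow_nonneg (abs_nonneg _) p)

lemma lam1_set_bddBelow : BddBelow
    {r : ℝ | ∃ u : E m → ℝ, ContDiff ℝ (⊤ : ℕ∞) u ∧ HasCompactSupport u ∧
      tsupport u ⊆ ω ∧ u ≠ 0 ∧
      r = (∫ x in ω, ‖fderiv ℝ u x‖ ^ p) / (∫ x in ω, |u x| ^ p)} :=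
  ⟨0, fun r hr => lam1_set_subset_Ici hr⟩

lemma lam1_set_nonempty (hωopen : IsOpen ω) (hωne : ω.Nonempty) :
    ∃ v : E m → ℝ, ContDiff ℝ (⊤ : ℕ∞) v ∧ HasCompactSupport v ∧
      tsupport v ⊆ ω ∧ v ≠ 0 := by
  obtain ⟨x0, hx0⟩ := hωne
  obtain ⟨δ, hδ, hball⟩ := Metric.isOpen_iff.mp hωopen x0 hx0
  let f : ContDiffBump x0 := ⟨δ/4, δ/2, by positivity, by linarith⟩
  refine ⟨f, f.contDiff, f.hasCompactSupport, ?_, ?_⟩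
  · rw [f.tsupport_eq]
    refine subset_trans ?_ hball
    intro y hy
    have : dist y x0 ≤ δ/2 := hy
    exact lt_of_le_of_lt this (by linarith)
  · intro h
    have : f x0 = 0 := congrFun h x0
    rw [f.one_of_mem_closedBall (Metric.mem_closedBall_self (by positivity))] at this
    norm_num at this


lemma lam1_nonneg (hωopen : IsOpen ω) (hωne : ω.Nonempty) : 0 ≤ lam1 p ω := by
  obtain ⟨v, hv1, hv2, hv3, hv4⟩ := lam1_set_nonempty hωopen hωne
  exact le_csInf ⟨_, v, hv1, hv2, hv3, hv4, rfl⟩ (fun r hr => lam1_set_subset_Ici hr)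

lemma lam1_mul_le (hp0 : 0 < p) (hωopen : IsOpen ω) (hωne : ω.Nonempty)
    {v : E m → ℝ} (hv : ContDiff ℝ (⊤ : ℕ∞) v) (hvs : HasCompactSupport v)
    (hvω : tsupport v ⊆ ω) :
    lam1 p ω * ∫ t, |v t| ^ p ≤ ∫ t, ‖fderiv ℝ v t‖ ^ p := by
  by_cases hne : v = 0
  · subst hne
    simp only [Pi.zero_apply, abs_zero, Real.zero_rpow hp0.ne']
    have : fderiv ℝ (0 : E m → ℝ) = 0 := by
      ext x y
      have : (0 : E m → ℝ) = fun _ => (0:ℝ) := rfl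
      rw [this, fderiv_const_apply]
      simp
    simp [this, Real.zero_rpow hp0.ne']
  · have hden : 0 < ∫ t, |v t| ^ p := integral_abs_rpow_pos hp0 hv.continuous hvs hne
    have hmem : (∫ x in ω, ‖fderiv ℝ v x‖ ^ p) / (∫ x in ω, |v x| ^ p) ∈
        {r : ℝ | ∃ u : E m → ℝ, ContDiff ℝ (⊤ : ℕ∞) u ∧ HasCompactSupport u ∧
          tsupport u ⊆ ω ∧ u ≠ 0 ∧
          r = (∫ x in ω, ‖fderiv ℝ u x‖ ^ p) / (∫ x in ω, |u x| ^ p)} :=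
      ⟨v, hv, hvs, hvω, hne, rfl⟩
    have hle : lam1 p ω ≤ (∫ x in ω, ‖fderiv ℝ v x‖ ^ p) / (∫ x in ω, |v x| ^ p) :=
      csInf_le lam1_set_bddBelow hmem
    rw [lam1_setInt_eq_abs hp0 hvω, lam1_setInt_eq_fderiv hp0 hvω] at hle
    calc lam1 p ω * ∫ t, |v t| ^ p
        ≤ ((∫ t, ‖fderiv ℝ v t‖ ^ p) / (∫ t, |v t| ^ p)) * ∫ t, |v t| ^ p := by
          exact mul_le_mul_of_nonneg_right hle (le_of_lt hden)
      _ = ∫ t, ‖fderiv ℝ v t‖ ^ p := by field_simp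

lemma slice_gradP_integrable (hp0 : 0 < p) (hu : ContDiff ℝ (⊤ : ℕ∞) u)
    (hus : HasCompactSupport u) (s : ℝ) :
    Integrable (fun t => gradP p u (s, t)) := by
  have hc : Continuous (fun t => gradP p u (s, t)) :=
    (gradP_continuous hp0 hu).comp (Continuous.prodMk_right s)
  apply hc.integrable_of_hasCompactSupport
  apply HasCompactSupport.intro (hus.image continuous_snd)
  intro t ht
  apply gradP_zero_of_nmem hp0 u
  intro h
  exact ht ⟨(s, t), h, rfl⟩

lemma abs_rpow_zero_of_nmem (hp0 : 0 < p) {x : ℝ × E m} (hx : x ∉ tsupport u) :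
    |u x| ^ p = 0 := by
  rw [image_eq_zero_of_notMem_tsupport hx, abs_zero, Real.zero_rpow hp0.ne']

lemma dir_ge (hp : 1 < p) (hωopen : IsOpen ω) (hωne : ω.Nonempty)
    {r : ℝ} (hr : r ∈ {r : ℝ | ∃ u : ℝ × E m → ℝ, ContDiff ℝ (⊤ : ℕ∞) u ∧
      HasCompactSupport u ∧ tsupport u ⊆ tube ω ∧ u ≠ 0 ∧
      r = (∫ x in tube ω, gradP p u x) / (∫ x in tube ω, |u x| ^ p)}) :
    lam1 p ω ≤ r := by
  obtain ⟨u, hu, hus, huω, hune, rfl⟩ := hr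
  have hp0 : 0 < p := by linarith
  have hI1 : Integrable (gradP p u) := gradP_integrable hp0 hu hus
  have hI2 : Integrable (fun x => |u x| ^ p) := integrable_abs_rpow hp0 hu.continuous hus
  have hden : 0 < ∫ x, |u x| ^ p := integral_abs_rpow_pos hp0 hu.continuous hus hune
  have hnum_eq : ∫ x in tube ω, gradP p u x = ∫ x, gradP p u x :=
    setIntegral_eq_integral_of_forall_compl_eq_zero
      (fun x hx => gradP_zero_of_nmem hp0 u (fun h => hx (huω h)))
  have hden_eq : ∫ x in tube ω, |u x| ^ p = ∫ x, |u x| ^ p :=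
    setIntegral_eq_integral_of_forall_compl_eq_zero
      (fun x hx => abs_rpow_zero_of_nmem hp0 (fun h => hx (huω h)))
  rw [hnum_eq, hden_eq, le_div_iff₀ hden]
  have hprod : (volume : Measure (ℝ × E m)) = (volume : Measure ℝ).prod volume :=
    Measure.volume_eq_prod ℝ (E m)
  have hI1' : Integrable (gradP p u) ((volume : Measure ℝ).prod volume) := hprod ▸ hI1
  have hI2' : Integrable (fun x : ℝ × E m => |u x| ^ p) ((volume : Measure ℝ).prod volume) :=
    hprod ▸ hI2
  have hnum2 : ∫ x, gradP p u x = ∫ s, ∫ t, gradP p u (s, t) := by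
    rw [hprod]; exact integral_prod _ hI1'
  have hden2 : (∫ x : ℝ × E m, |u x| ^ p) = ∫ s, ∫ t, |u (s, t)| ^ p := by
    rw [hprod]; exact integral_prod _ hI2'
  rw [hnum2, hden2, ← integral_const_mul]
  apply integral_mono
  · exact (hI2'.integral_prod_left).const_mul _
  · exact hI1'.integral_prod_left
  intro s
  have h1 : lam1 p ω * ∫ t, |u (s, t)| ^ p ≤ ∫ t, ‖fderiv ℝ (fun t => u (s, t)) t‖ ^ p :=
    lam1_mul_le hp0 hωopen hωne (slice_contDiff hu s) (slice_hasCompactSupport hus s)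
      (slice_tsupport huω s)
  refine h1.trans (integral_mono
    (norm_fderiv_rpow_integrable hp0 (slice_contDiff hu s) (slice_hasCompactSupport hus s))
    (slice_gradP_integrable hp0 hu hus s) ?_)
  intro t
  simp only []
  rw [clm_norm_rpow]
  have he : ∀ μ, (fderiv ℝ (fun t => u (s, t)) t) (EuclideanSpace.single μ 1) = dT u (s, t) μ :=
    slice_fderiv_apply hu s t
  simp_rw [he]
  unfold gradP
  apply Real.rpow_le_rpow (by positivity) (le_add_of_nonneg_left (sq_nonneg _)) (by positivity)

def bump1 : ContDiffBump (0:ℝ) := ⟨1, 2, one_pos, one_lt_two⟩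

lemma bump1_deriv_cont : Continuous (deriv (bump1 : ℝ → ℝ)) :=
  bump1.contDiff.continuous_deriv (by exact_mod_cast le_top)

lemma bump1_deriv_integrable (hp0 : 0 < p) : Integrable (fun s => |deriv (bump1 : ℝ → ℝ) s| ^ p) :=
  integrable_abs_rpow hp0 bump1_deriv_cont bump1.hasCompactSupport.deriv

section Chi
variable {N : ℝ} (hN : 1 ≤ N)

lemma chiN_contDiff (N : ℝ) : ContDiff ℝ (⊤ : ℕ∞) (fun s : ℝ => bump1 (s / N)) :=
  bump1.contDiff.comp (contDiff_id.div_const N)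

include hN

lemma chiN_one {s : ℝ} (hs : |s| ≤ N) : bump1 (s / N) = 1 := by
  apply bump1.one_of_mem_closedBall
  have hN0 : (0:ℝ) < N := lt_of_lt_of_le one_pos hN
  simp only [Metric.mem_closedBall, dist_zero_right, Real.norm_eq_abs, abs_div,
    abs_of_pos hN0]
  have hri : bump1.rIn = 1 := rfl
  rw [hri, div_le_one hN0]
  exact hs

lemma chiN_zero {s : ℝ} (hs : s ∉ Metric.closedBall (0:ℝ) (2*N)) : bump1 (s / N) = 0 := by
  have hN0 : (0:ℝ) < N := lt_of_lt_of_le one_pos hN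
  apply bump1.zero_of_le_dist
  simp only [Metric.mem_closedBall, dist_zero_right, Real.norm_eq_abs, not_le] at hs
  have : bump1.rOut = 2 := rfl
  rw [this]
  simp only [dist_zero_right, Real.norm_eq_abs, abs_div, abs_of_pos hN0]
  rw [le_div_iff₀ hN0]
  linarith

lemma chiN_hasCompactSupport : HasCompactSupport (fun s : ℝ => bump1 (s / N)) :=
  HasCompactSupport.intro (isCompact_closedBall 0 (2*N)) (fun s hs => chiN_zero hN hs)

lemma chiN_deriv (s : ℝ) :
    deriv (fun s : ℝ => bump1 (s / N)) s = deriv (bump1 : ℝ → ℝ) (s / N) * N⁻¹ := by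
  have h1 : HasDerivAt (fun s : ℝ => s / N) N⁻¹ s := by
    simpa using (hasDerivAt_id s).div_const N
  have h2 : HasDerivAt (bump1 : ℝ → ℝ) (deriv (bump1 : ℝ → ℝ) (s / N)) (s / N) :=
    ((bump1.contDiff (n := 1)).differentiable (by simp) _).hasDerivAt.congr_deriv rfl
  exact (h2.comp s h1).deriv

-- Cn lower bound
lemma chiN_int_lb (hp0 : 0 < p) : 2 * N ≤ ∫ s : ℝ, (bump1 (s / N)) ^ p := by
  have hN0 : (0:ℝ) < N := lt_of_lt_of_le one_pos hN
  have hint : Integrable (fun s : ℝ => (bump1 (s / N)) ^ p) := by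
    have := integrable_abs_rpow hp0 (chiN_contDiff N).continuous (chiN_hasCompactSupport hN)
    apply this.congr
    filter_upwards with s
    rw [abs_of_nonneg bump1.nonneg]
  have h1 : ∫ s in Icc (-N) N, (bump1 (s / N)) ^ p = 2 * N := by
    rw [setIntegral_congr_fun measurableSet_Icc (g := fun _ => (1:ℝ))]
    · simp only [integral_const, MeasurableSet.univ, Measure.restrict_apply, univ_inter,
        Real.volume_Icc, smul_eq_mul, mul_one]
      rw [Measure.real, Measure.restrict_apply MeasurableSet.univ, univ_inter, Real.volume_Icc,
      ENNReal.toReal_ofReal (by linarith)]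
      ring
    · intro s hs
      simp only [chiN_one hN (abs_le.mpr ⟨hs.1, hs.2⟩), Real.one_rpow]
  calc 2 * N = ∫ s in Icc (-N) N, (bump1 (s / N)) ^ p := h1.symm
    _ ≤ ∫ s : ℝ, (bump1 (s / N)) ^ p := by
        apply setIntegral_le_integral hint
        filter_upwards with s
        exact Real.rpow_nonneg bump1.nonneg p

-- Dn value
lemma chiN_deriv_int (hp0 : 0 < p) :
    ∫ s : ℝ, |deriv (fun s : ℝ => bump1 (s / N)) s| ^ p
      = (N⁻¹) ^ p * (N * ∫ s : ℝ, |deriv (bump1 : ℝ → ℝ) s| ^ p) := by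
  have hN0 : (0:ℝ) < N := lt_of_lt_of_le one_pos hN
  have h1 : ∀ s : ℝ, |deriv (fun s : ℝ => bump1 (s / N)) s| ^ p
      = (N⁻¹) ^ p * |deriv (bump1 : ℝ → ℝ) (s / N)| ^ p := by
    intro s
    rw [chiN_deriv hN, abs_mul, Real.mul_rpow (abs_nonneg _) (abs_nonneg _),
      abs_of_pos (inv_pos.mpr hN0)]
    ring
  simp_rw [h1]
  rw [integral_const_mul, Measure.integral_comp_div (fun y => |deriv (bump1 : ℝ → ℝ) y| ^ p) N]
  rw [abs_of_pos hN0, smul_eq_mul]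

end Chi

section ProdFun
variable {f : ℝ → ℝ} {v : E m → ℝ}

lemma prod_hasFDerivAt (hf : ContDiff ℝ (⊤ : ℕ∞) f) (hv : ContDiff ℝ (⊤ : ℕ∞) v)
    (s : ℝ) (t : E m) :
    HasFDerivAt (fun x : ℝ × E m => f x.1 * v x.2)
      (f s • ((fderiv ℝ v t).comp (ContinuousLinearMap.snd ℝ ℝ (E m))) +
       v t • (((1 : ℝ →L[ℝ] ℝ).smulRight (deriv f s)).comp (ContinuousLinearMap.fst ℝ ℝ (E m))))
      (s, t) := by
  have h1 : HasFDerivAt (fun x : ℝ × E m => f x.1)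
      (((1 : ℝ →L[ℝ] ℝ).smulRight (deriv f s)).comp (ContinuousLinearMap.fst ℝ ℝ (E m))) (s, t) :=
    HasFDerivAt.comp (s, t)
      ((hf.differentiable (by simp) s).hasDerivAt.hasFDerivAt) hasFDerivAt_fst
  have h2 : HasFDerivAt (fun x : ℝ × E m => v x.2)
      ((fderiv ℝ v t).comp (ContinuousLinearMap.snd ℝ ℝ (E m))) (s, t) :=
    HasFDerivAt.comp (s, t)
      ((hv.differentiable (by simp) t).hasFDerivAt) hasFDerivAt_snd
  exact h1.mul h2

lemma prod_dS (hf : ContDiff ℝ (⊤ : ℕ∞) f) (hv : ContDiff ℝ (⊤ : ℕ∞) v) (s : ℝ) (t : E m) :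
    dS (fun x : ℝ × E m => f x.1 * v x.2) (s, t) = v t * deriv f s := by
  unfold dS
  rw [(prod_hasFDerivAt hf hv s t).fderiv]
  simp

lemma prod_dT (hf : ContDiff ℝ (⊤ : ℕ∞) f) (hv : ContDiff ℝ (⊤ : ℕ∞) v) (s : ℝ) (t : E m)
    (μ : Fin m) :
    dT (fun x : ℝ × E m => f x.1 * v x.2) (s, t) μ = f s * fderiv ℝ v t (EuclideanSpace.single μ 1) := by
  unfold dT
  rw [(prod_hasFDerivAt hf hv s t).fderiv]
  simp

lemma sq_rpow_half {x p : ℝ} (hx : 0 ≤ x) : (x ^ 2) ^ (p / 2) = x ^ p := by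
  rw [← Real.rpow_natCast x 2, ← Real.rpow_mul hx]
  congr 1
  push_cast
  ring

lemma gradP_prod_bound (hp : 1 < p) {θ : ℝ} (hθ : θ ∈ Set.Ioo (0:ℝ) 1)
    (hf : ContDiff ℝ (⊤ : ℕ∞) f) (hf0 : ∀ s, 0 ≤ f s) (hv : ContDiff ℝ (⊤ : ℕ∞) v)
    (s : ℝ) (t : E m) :
    gradP p (fun x : ℝ × E m => f x.1 * v x.2) (s, t)
      ≤ (1-θ)^(1-p) * ((f s) ^ p * ‖fderiv ℝ v t‖ ^ p)
        + θ^(1-p) * (|deriv f s| ^ p * |v t| ^ p) := by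
  unfold gradP
  rw [prod_dS hf hv s t]
  have hdT : ∀ μ, dT (fun x : ℝ × E m => f x.1 * v x.2) (s, t) μ
      = f s * fderiv ℝ v t (EuclideanSpace.single μ 1) := prod_dT hf hv s t
  simp_rw [hdT, mul_pow]
  rw [← Finset.mul_sum, ← clm_norm_sq]
  set a := f s * ‖fderiv ℝ v t‖ with ha_def
  set b := |v t * deriv f s| with hb_def
  have ha : 0 ≤ a := mul_nonneg (hf0 s) (norm_nonneg _)
  have hb : 0 ≤ b := abs_nonneg _
  have e1 : v t ^ 2 * deriv f s ^ 2 + f s ^ 2 * ‖fderiv ℝ v t‖ ^ 2 = b^2 + a^2 := by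
    rw [hb_def, ha_def, sq_abs]
    ring
  rw [e1]
  have e2 : b^2 + a^2 ≤ (a + b)^2 := by nlinarith [mul_nonneg ha hb]
  have e3 : (b^2 + a^2) ^ (p/2) ≤ ((a+b)^2) ^ (p/2) :=
    Real.rpow_le_rpow (by positivity) e2 (by positivity)
  rw [sq_rpow_half (by positivity)] at e3
  refine e3.trans ((convex_ineq hp ha hb hθ).trans (le_of_eq ?_))
  rw [Real.mul_rpow (hf0 s) (norm_nonneg _), hb_def, abs_mul,
    Real.mul_rpow (abs_nonneg _) (abs_nonneg _)]
  ring

end ProdFun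

lemma prod_set_subset_Ici :
    {r : ℝ | ∃ u : ℝ × E m → ℝ, ContDiff ℝ (⊤ : ℕ∞) u ∧ HasCompactSupport u ∧
      tsupport u ⊆ tube ω ∧ u ≠ 0 ∧
      r = (∫ x in tube ω, gradP p u x) / (∫ x in tube ω, |u x| ^ p)} ⊆ Set.Ici 0 := by
  rintro r ⟨u, -, -, -, -, rfl⟩
  rw [Set.mem_Ici]
  apply div_nonneg
  · exact integral_nonneg (fun x => gradP_nonneg u x)
  · exact integral_nonneg (fun x => Real.rpow_nonneg (abs_nonneg _) p)

lemma prod_set_bddBelow : BddBelow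
    {r : ℝ | ∃ u : ℝ × E m → ℝ, ContDiff ℝ (⊤ : ℕ∞) u ∧ HasCompactSupport u ∧
      tsupport u ⊆ tube ω ∧ u ≠ 0 ∧
      r = (∫ x in tube ω, gradP p u x) / (∫ x in tube ω, |u x| ^ p)} :=
  ⟨0, fun r hr => prod_set_subset_Ici hr⟩

lemma un_props {v : E m → ℝ} (hv : ContDiff ℝ (⊤ : ℕ∞) v) (hvs : HasCompactSupport v)
    (hvω : tsupport v ⊆ ω) (hvne : v ≠ 0) {N : ℝ} (hN : 1 ≤ N) :
    ContDiff ℝ (⊤ : ℕ∞) (fun x : ℝ × E m => bump1 (x.1 / N) * v x.2) ∧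
    HasCompactSupport (fun x : ℝ × E m => bump1 (x.1 / N) * v x.2) ∧
    tsupport (fun x : ℝ × E m => bump1 (x.1 / N) * v x.2) ⊆ tube ω ∧
    (fun x : ℝ × E m => bump1 (x.1 / N) * v x.2) ≠ 0 := by
  refine ⟨((chiN_contDiff N).comp contDiff_fst).mul (hv.comp contDiff_snd), ?_, ?_, ?_⟩
  · apply HasCompactSupport.intro ((isCompact_closedBall (0:ℝ) (2*N)).prod hvs)
    intro x hx
    rw [Set.mem_prod] at hx
    push_neg at hx
    by_cases h1 : x.1 ∈ Metric.closedBall (0:ℝ) (2*N)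
    · rw [image_eq_zero_of_notMem_tsupport (hx h1), mul_zero]
    · rw [chiN_zero hN h1, zero_mul]
  · have hsub : Function.support (fun x : ℝ × E m => bump1 (x.1 / N) * v x.2)
        ⊆ Set.univ ×ˢ tsupport v := by
      intro x hx
      refine ⟨trivial, subset_tsupport v ?_⟩
      intro h
      apply hx
      simp only [Function.mem_support] at *
      rw [h, mul_zero]
    refine (closure_minimal hsub (isClosed_univ.prod (isClosed_tsupport v))).trans ?_
    exact Set.prod_mono subset_rfl hvω
  · obtain ⟨t0, ht0⟩ : ∃ t, v t ≠ 0 := by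
      by_contra h; push_neg at h; exact hvne (funext h)
    intro h
    have h2 : bump1 ((0:ℝ) / N) * v t0 = 0 := congrFun h (0, t0)
    rw [chiN_one hN (by simp; linarith)] at h2
    rw [one_mul] at h2
    exact ht0 h2

lemma dir_le_n (hp : 1 < p) (hωopen : IsOpen ω) (hωne : ω.Nonempty)
    {v : E m → ℝ} (hv : ContDiff ℝ (⊤ : ℕ∞) v) (hvs : HasCompactSupport v)
    (hvω : tsupport v ⊆ ω) (hvne : v ≠ 0) {θ : ℝ} (hθ : θ ∈ Set.Ioo (0:ℝ) 1)
    {n : ℕ} (hn : 1 ≤ n) :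
    lam1Prod p (tube ω) ≤
      (1-θ)^(1-p) * ((∫ x, ‖fderiv ℝ v x‖ ^ p) / (∫ x, |v x| ^ p))
      + θ^(1-p) * ((∫ s : ℝ, |deriv (bump1 : ℝ → ℝ) s| ^ p) / 2) * (((n:ℝ))⁻¹) ^ p := by
  have hp0 : 0 < p := by linarith
  set N : ℝ := (n : ℝ) with hNdef
  have hN : 1 ≤ N := by rw [hNdef]; exact_mod_cast hn
  have hN0 : (0:ℝ) < N := by linarith
  set A := ∫ x, ‖fderiv ℝ v x‖ ^ p with hA
  set B := ∫ x, |v x| ^ p with hBdef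
  have hB : 0 < B := integral_abs_rpow_pos hp0 hv.continuous hvs hvne
  set K := ∫ s : ℝ, |deriv (bump1 : ℝ → ℝ) s| ^ p with hKdef
  have hK : 0 ≤ K := integral_nonneg (fun s => Real.rpow_nonneg (abs_nonneg _) p)
  set χn : ℝ → ℝ := fun s => bump1 (s / N) with hχdef
  set un : ℝ × E m → ℝ := fun x => χn x.1 * v x.2 with hundef
  obtain ⟨hun, huns, hunω, hunne⟩ := un_props hv hvs hvω hvne hN
  set Cn := ∫ s : ℝ, (χn s) ^ p with hCdef
  have hCn : 2 * N ≤ Cn := chiN_int_lb hN hp0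
  have hCn0 : 0 < Cn := lt_of_lt_of_le (by linarith) hCn
  have hDn : (∫ s : ℝ, |deriv χn s| ^ p) = N⁻¹ ^ p * (N * K) := chiN_deriv_int hN hp0
  set Dn := ∫ s : ℝ, |deriv χn s| ^ p with hDdef
  -- integrability facts
  have hprod : (volume : Measure (ℝ × E m)) = (volume : Measure ℝ).prod volume :=
    Measure.volume_eq_prod ℝ (E m)
  have hIχ : Integrable (fun s : ℝ => (χn s) ^ p) := by
    have := integrable_abs_rpow hp0 (chiN_contDiff N).continuous (chiN_hasCompactSupport hN)
    apply this.congr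
    filter_upwards with s
    rw [abs_of_nonneg bump1.nonneg]
  have hIχ' : Integrable (fun s : ℝ => |deriv χn s| ^ p) := by
    have hc : Continuous (deriv χn) := (chiN_contDiff N).continuous_deriv (by exact_mod_cast le_top)
    exact integrable_abs_rpow hp0 hc (chiN_hasCompactSupport hN).deriv
  have hIv : Integrable (fun t => |v t| ^ p) := integrable_abs_rpow hp0 hv.continuous hvs
  have hIfv : Integrable (fun t => ‖fderiv ℝ v t‖ ^ p) := norm_fderiv_rpow_integrable hp0 hv hvs
  -- membership
  have hmem : (∫ x in tube ω, gradP p un x) / (∫ x in tube ω, |un x| ^ p) ∈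
      {r : ℝ | ∃ u : ℝ × E m → ℝ, ContDiff ℝ (⊤ : ℕ∞) u ∧ HasCompactSupport u ∧
        tsupport u ⊆ tube ω ∧ u ≠ 0 ∧
        r = (∫ x in tube ω, gradP p u x) / (∫ x in tube ω, |u x| ^ p)} :=
    ⟨un, hun, huns, hunω, hunne, rfl⟩
  have hstep1 : lam1Prod p (tube ω) ≤
      (∫ x in tube ω, gradP p un x) / (∫ x in tube ω, |un x| ^ p) :=
    csInf_le prod_set_bddBelow hmem
  -- convert to global integrals
  have hnum_eq : ∫ x in tube ω, gradP p un x = ∫ x, gradP p un x :=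
    setIntegral_eq_integral_of_forall_compl_eq_zero
      (fun x hx => gradP_zero_of_nmem hp0 un (fun h => hx (hunω h)))
  have hden_eq : ∫ x in tube ω, |un x| ^ p = ∫ x, |un x| ^ p :=
    setIntegral_eq_integral_of_forall_compl_eq_zero
      (fun x hx => abs_rpow_zero_of_nmem hp0 (fun h => hx (hunω h)))
  rw [hnum_eq, hden_eq] at hstep1
  -- denominator value
  have hden_val : (∫ x : ℝ × E m, |un x| ^ p) = Cn * B := by
    have hpt : ∀ x : ℝ × E m, |un x| ^ p = (χn x.1) ^ p * |v x.2| ^ p := by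
      intro x
      rw [hundef]
      simp only []
      rw [abs_mul, Real.mul_rpow (abs_nonneg _) (abs_nonneg _), abs_of_nonneg bump1.nonneg]
    simp_rw [hpt]
    rw [hprod]
    exact integral_prod_mul (fun s => χn s ^ p) (fun t => |v t| ^ p)
  have hden_pos : 0 < Cn * B := mul_pos hCn0 hB
  -- numerator bound
  have hnum_bound : (∫ x : ℝ × E m, gradP p un x)
      ≤ (1-θ)^(1-p) * (Cn * A) + θ^(1-p) * (Dn * B) := by
    have hI1 : Integrable (fun x : ℝ × E m => (χn x.1) ^ p * ‖fderiv ℝ v x.2‖ ^ p) := by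
      rw [hprod]; exact hIχ.mul_prod hIfv
    have hI2 : Integrable (fun x : ℝ × E m => |deriv χn x.1| ^ p * |v x.2| ^ p) := by
      rw [hprod]; exact hIχ'.mul_prod hIv
    have hle : ∀ x : ℝ × E m, gradP p un x ≤
        (1-θ)^(1-p) * ((χn x.1) ^ p * ‖fderiv ℝ v x.2‖ ^ p)
        + θ^(1-p) * (|deriv χn x.1| ^ p * |v x.2| ^ p) := by
      rintro ⟨s, t⟩
      exact gradP_prod_bound hp hθ (chiN_contDiff N) (fun s => bump1.nonneg) hv s t
    calc (∫ x : ℝ × E m, gradP p un x)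
        ≤ ∫ x : ℝ × E m, ((1-θ)^(1-p) * ((χn x.1) ^ p * ‖fderiv ℝ v x.2‖ ^ p)
            + θ^(1-p) * (|deriv χn x.1| ^ p * |v x.2| ^ p)) := by
          exact integral_mono (gradP_integrable hp0 hun huns)
            ((hI1.const_mul _).add (hI2.const_mul _)) hle
      _ = (1-θ)^(1-p) * (Cn * A) + θ^(1-p) * (Dn * B) := by
          rw [integral_add (hI1.const_mul _) (hI2.const_mul _), integral_const_mul,
            integral_const_mul]
          congr 1
          · congr 1
            rw [hprod]
            exact integral_prod_mul (fun s => χn s ^ p) (fun t => ‖fderiv ℝ v t‖ ^ p)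
          · congr 1
            rw [hprod]
            exact integral_prod_mul (fun s => |deriv χn s| ^ p) (fun t => |v t| ^ p)
  -- combine
  have hstep2 : (∫ x : ℝ × E m, gradP p un x) / (∫ x : ℝ × E m, |un x| ^ p)
      ≤ ((1-θ)^(1-p) * (Cn * A) + θ^(1-p) * (Dn * B)) / (Cn * B) := by
    rw [hden_val]
    gcongr
  have halg : ((1-θ)^(1-p) * (Cn * A) + θ^(1-p) * (Dn * B)) / (Cn * B)
      = (1-θ)^(1-p) * (A / B) + θ^(1-p) * (Dn / Cn) := by
    field_simp
  have herr : Dn / Cn ≤ (K/2) * N⁻¹ ^ p := by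
    have h1 : Dn / Cn ≤ Dn / (2*N) := by
      apply div_le_div_of_nonneg_left _ (by linarith) hCn
      rw [hDn]
      positivity
    refine h1.trans (le_of_eq ?_)
    rw [hDn]
    field_simp
  calc lam1Prod p (tube ω)
      ≤ (∫ x : ℝ × E m, gradP p un x) / (∫ x : ℝ × E m, |un x| ^ p) := hstep1
    _ ≤ ((1-θ)^(1-p) * (Cn * A) + θ^(1-p) * (Dn * B)) / (Cn * B) := hstep2
    _ = (1-θ)^(1-p) * (A / B) + θ^(1-p) * (Dn / Cn) := halg
    _ ≤ (1-θ)^(1-p) * (A / B) + θ^(1-p) * ((K/2) * N⁻¹ ^ p) := by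
        apply add_le_add le_rfl
        exact mul_le_mul_of_nonneg_left herr (Real.rpow_nonneg hθ.1.le _)
    _ = (1-θ)^(1-p) * (A / B) + θ^(1-p) * (K / 2) * N⁻¹ ^ p := by ring

lemma dir_le (hp : 1 < p) (hωopen : IsOpen ω) (hωne : ω.Nonempty)
    {r : ℝ} (hr : r ∈ {r : ℝ | ∃ u : E m → ℝ, ContDiff ℝ (⊤ : ℕ∞) u ∧ HasCompactSupport u ∧
      tsupport u ⊆ ω ∧ u ≠ 0 ∧
      r = (∫ x in ω, ‖fderiv ℝ u x‖ ^ p) / (∫ x in ω, |u x| ^ p)}) :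
    lam1Prod p (tube ω) ≤ r := by
  obtain ⟨v, hv, hvs, hvω, hvne, rfl⟩ := hr
  have hp0 : 0 < p := by linarith
  rw [lam1_setInt_eq_abs hp0 hvω, lam1_setInt_eq_fderiv hp0 hvω]
  set A := ∫ x, ‖fderiv ℝ v x‖ ^ p with hA
  set B := ∫ x, |v x| ^ p with hB
  set K := ∫ s : ℝ, |deriv (bump1 : ℝ → ℝ) s| ^ p with hK
  have claim1 : ∀ θ ∈ Set.Ioo (0:ℝ) 1, lam1Prod p (tube ω) ≤ (1-θ)^(1-p) * (A/B) := by
    intro θ hθ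
    have h0 : Tendsto (fun n : ℕ => ((n:ℝ))⁻¹) atTop (𝓝 0) :=
      tendsto_inv_atTop_nhds_zero_nat
    have h1 : Tendsto (fun n : ℕ => (((n:ℝ))⁻¹) ^ p) atTop (𝓝 0) := by
      have hc : ContinuousAt (fun x : ℝ => x ^ p) 0 :=
        Real.continuousAt_rpow_const 0 p (Or.inr hp0.le)
      simpa [Function.comp_def, Real.zero_rpow hp0.ne'] using hc.tendsto.comp h0
    have htend : Tendsto (fun n : ℕ =>
        (1-θ)^(1-p) * (A/B) + θ^(1-p) * (K/2) * (((n:ℝ))⁻¹) ^ p) atTop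
        (𝓝 ((1-θ)^(1-p) * (A/B))) := by
      have h2 := (h1.const_mul (θ^(1-p) * (K/2))).const_add ((1-θ)^(1-p) * (A/B))
      simp only [mul_zero, add_zero] at h2
      exact h2
    apply ge_of_tendsto htend
    filter_upwards [eventually_ge_atTop 1] with n hn
    exact dir_le_n hp hωopen hωne hv hvs hvω hvne hθ hn
  have h0 : Tendsto (fun k : ℕ => 1 - (1:ℝ)/(k+2)) atTop (𝓝 1) := by
    have ha : Tendsto (fun k : ℕ => ((k:ℝ) + 2)) atTop atTop :=
      tendsto_atTop_add_const_right _ 2 tendsto_natCast_atTop_atTop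
    have hb := ha.inv_tendsto_atTop
    have hc : Tendsto (fun k : ℕ => (1:ℝ)/(k+2)) atTop (𝓝 0) := by
      refine hb.congr (fun k => ?_)
      simp [one_div]
    have := hc.const_sub 1
    simpa using this
  have h2 : Tendsto (fun k : ℕ => (1 - (1:ℝ)/(k+2))^(1-p) * (A/B)) atTop (𝓝 (A/B)) := by
    have hc : ContinuousAt (fun x : ℝ => x ^ (1-p)) 1 :=
      Real.continuousAt_rpow_const 1 (1-p) (Or.inl one_ne_zero)
    have h3 := hc.tendsto.comp h0
    rw [Real.one_rpow] at h3
    have h4 := h3.mul_const (A/B)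
    simpa [Function.comp_def] using h4
  apply ge_of_tendsto h2
  filter_upwards with k
  apply claim1
  constructor
  · positivity
  · rw [div_lt_one (by positivity)]
    have : (0:ℝ) ≤ (k:ℝ) := Nat.cast_nonneg k
    linarith

end Main

/-- The spectral threshold of the straight tube `Ω₀ = ℝ × ω` equals the spectral
threshold of its cross-section `ω`. -/
theorem stmt_2 {m : ℕ} (hm : 1 ≤ m) (p : ℝ) (hp : 1 < p)
    (ω : Set (E m)) (hωopen : IsOpen ω) (hωne : ω.Nonempty)
    (hωbdd : Bornology.IsBounded ω) (hωconn : IsConnected ω) :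
    lam1Prod p (tube ω) = lam1 p ω := by
  apply le_antisymm
  · obtain ⟨v, hv1, hv2, hv3, hv4⟩ := lam1_set_nonempty hωopen hωne
    exact le_csInf ⟨_, v, hv1, hv2, hv3, hv4, rfl⟩
      (fun r hr => dir_le hp hωopen hωne hr)
  · obtain ⟨v, hv1, hv2, hv3, hv4⟩ := lam1_set_nonempty hωopen hωne
    obtain ⟨hu1, hu2, hu3, hu4⟩ := un_props hv1 hv2 hv3 hv4 (le_refl (1:ℝ))
    exact le_csInf ⟨_, _, hu1, hu2, hu3, hu4, rfl⟩
      (fun r hr => dir_ge hp hωopen hωne hr)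


end
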